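/- Fix positive integers k and n, and let x_1, ..., x_{k+1} be distinct primary domain types. Consider the monomer collection (the depth-k, redundancy-n translator cascade, without input) consisting of: for each i in {1, ..., k}, n copies of the two-domain monomer {x_i*, x_{i+1}} and n copies of the single-domain monomer {x_i}; one monomer consisting of n copies of x_{k+1}* ; and one terminator monomer consisting of n copies of x_{k+1}. If γ is a saturated configuration of this monomer collection in which the terminator monomer is free (forms a polymer by itself, bound to no other monomer; i.e., the configuration has output 1), then S(γ) = n(k-1) + 2. -/

import Mathlib

/-- A monomer type over a set `D` of primary domain types: for each primary
domain type it records the number of instances of that domain and of its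
complementary (starred) domain on the monomer. -/
structure Monomer (D : Type) where
  prim : D → ℕ
  star : D → ℕ

/-- Instances of primary domains in the monomer collection `mon : I → Monomer D`
(`I` indexes the individual monomers). -/
def PrimInst {D I : Type} (mon : I → Monomer D) : Type :=
  Σ i : I, Σ x : D, Fin ((mon i).prim x)

/-- Instances of complementary (starred) domains in the collection `mon`. -/
def StarInst {D I : Type} (mon : I → Monomer D) : Type :=
  Σ i : I, Σ x : D, Fin ((mon i).star x)

/-- A configuration of the monomer collection `mon`: a matching between primary
domain instances and complementary domain instances of the same domain type. -/
structure Config {D I : Type} (mon : I → Monomer D) where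
  bond : PrimInst mon → Option (StarInst mon)
  inj : ∀ p q s, bond p = some s → bond q = some s → p = q
  compat : ∀ p s, bond p = some s → p.2.1 = s.2.1

namespace Config

variable {D I : Type} {mon : I → Monomer D}

/-- A configuration is saturated if no primary domain instance of some type and
complementary instance of the same type are both unmatched. -/
def Saturated (α : Config mon) : Prop :=
  ¬ ∃ (p : PrimInst mon) (s : StarInst mon),
      p.2.1 = s.2.1 ∧ α.bond p = none ∧ ∀ q, α.bond q ≠ some s

/-- The monomer binding graph: vertices are monomers, with an edge between two
(distinct) monomers that share at least one bound pair of domain instances.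
Its connected components are the polymers of the configuration. -/
def bindingGraph (α : Config mon) : SimpleGraph I where
  Adj i j := i ≠ j ∧ ∃ p s, α.bond p = some s ∧
      ((p.1 = i ∧ s.1 = j) ∨ (p.1 = j ∧ s.1 = i))
  symm := by
    constructor
    rintro i j ⟨hne, p, s, hb, hor⟩
    exact ⟨hne.symm, p, s, hb, hor.symm⟩
  loopless := by
    constructor
    rintro i ⟨hne, -⟩
    exact hne rfl

/-- The entropy `S(α)`: the number of polymers (connected components). -/
noncomputable def entropy (α : Config mon) : ℕ :=
  Nat.card α.bindingGraph.ConnectedComponent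

/-- A configuration is stable if it is saturated and has maximal entropy among
all saturated configurations of the same monomer collection. -/
def IsStable (α : Config mon) : Prop :=
  α.Saturated ∧ ∀ β : Config mon, β.Saturated → β.entropy ≤ α.entropy

/-- The size of a polymer (connected component) `C`: the number of monomers in it. -/
noncomputable def polymerSize (α : Config mon) (C : α.bindingGraph.ConnectedComponent) : ℕ :=
  Nat.card {i : I // α.bindingGraph.connectedComponentMk i = C}

/-- A monomer is free if its polymer contains no other monomer. -/
def Free (α : Config mon) (i : I) : Prop :=
  ∀ j : I, α.bindingGraph.Reachable i j → j = i

end Config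

/-- The monomer matrix `M_T` applied to a count vector `c`: component `x` is the
number of instances of domain `x` minus the number of instances of `x*` in the
collection with `c j` copies of monomer type `Mty j`. -/
def matVec {D : Type} {m : ℕ} (Mty : Fin m → Monomer D) (c : Fin m → ℕ) (x : D) : ℤ :=
  ∑ j, (c j : ℤ) * (((Mty j).prim x : ℤ) - ((Mty j).star x : ℤ))

/-! The depth-`k`, redundancy-`n` translator cascade (without input).
Domain `(i : Fin (k+1))` represents the primary domain type `x_{i+1}`. -/

/-- The translator gate monomer `{x_i*, x_{i+1}}` of layer `i` (0-indexed). -/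
def gateMon (k : ℕ) (i : Fin k) : Monomer (Fin (k + 1)) where
  prim := fun x => if x = i.succ then 1 else 0
  star := fun x => if x = i.castSucc then 1 else 0

/-- The single-domain monomer `{x_i}` of layer `i` (0-indexed). -/
def singleMon (k : ℕ) (i : Fin k) : Monomer (Fin (k + 1)) where
  prim := fun x => if x = i.castSucc then 1 else 0
  star := fun _ => 0

/-- The monomer consisting of `n` copies of `x_{k+1}*`. -/
def collectorMon (k n : ℕ) : Monomer (Fin (k + 1)) where
  prim := fun _ => 0
  star := fun x => if x = Fin.last k then n else 0

/-- The terminator monomer consisting of `n` copies of `x_{k+1}`. -/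
def terminatorMon (k n : ℕ) : Monomer (Fin (k + 1)) where
  prim := fun x => if x = Fin.last k then n else 0
  star := fun _ => 0

/-- Index set of the cascade collection: for each layer `i ∈ {1,…,k}`, `n`
copies of the gate monomer `{x_i*, x_{i+1}}` and `n` copies of `{x_i}`, plus
one collector monomer `{n ⬝ x_{k+1}*}` and one terminator monomer
`{n ⬝ x_{k+1}}`. -/
def CascadeIdx (k n : ℕ) : Type := (Fin k × Fin n) ⊕ ((Fin k × Fin n) ⊕ (Unit ⊕ Unit))

/-- The translator-cascade monomer collection. -/
def cascadeMon (k n : ℕ) : CascadeIdx k n → Monomer (Fin (k + 1)) :=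
  Sum.elim (fun p => gateMon k p.1)
    (Sum.elim (fun p => singleMon k p.1)
      (Sum.elim (fun _ => collectorMon k n) (fun _ => terminatorMon k n)))

/-- The index of the terminator monomer. -/
def termIdx (k n : ℕ) : CascadeIdx k n := Sum.inr (Sum.inr (Sum.inr ()))

section Aux
variable {D I : Type} [Fintype I] [Fintype D] [DecidableEq D] (mon : I → Monomer D)

instance : Fintype (PrimInst mon) := inferInstanceAs (Fintype (Σ i, Σ x, Fin _))
instance : Fintype (StarInst mon) := inferInstanceAs (Fintype (Σ i, Σ x, Fin _))

instance [DecidableEq I] : DecidableEq (PrimInst mon) :=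
  inferInstanceAs (DecidableEq (Σ i, Σ x, Fin _))
instance [DecidableEq I] : DecidableEq (StarInst mon) :=
  inferInstanceAs (DecidableEq (Σ i, Σ x, Fin _))

/-- prims of a given domain type -/
def primOfTypeEquiv (x : D) : {p : PrimInst mon // p.2.1 = x} ≃ Σ i : I, Fin ((mon i).prim x) where
  toFun := fun ⟨⟨i, y, f⟩, h⟩ => ⟨i, Fin.cast (congrArg _ h) f⟩
  invFun := fun ⟨i, f⟩ => ⟨⟨i, x, f⟩, rfl⟩
  left_inv := fun ⟨⟨i, y, f⟩, h⟩ => by subst h; rfl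
  right_inv := fun ⟨i, f⟩ => rfl

def starOfTypeEquiv (x : D) : {p : StarInst mon // p.2.1 = x} ≃ Σ i : I, Fin ((mon i).star x) where
  toFun := fun ⟨⟨i, y, f⟩, h⟩ => ⟨i, Fin.cast (congrArg _ h) f⟩
  invFun := fun ⟨i, f⟩ => ⟨⟨i, x, f⟩, rfl⟩
  left_inv := fun ⟨⟨i, y, f⟩, h⟩ => by subst h; rfl
  right_inv := fun ⟨i, f⟩ => rfl

lemma card_primOfType (x : D) :
    Fintype.card {p : PrimInst mon // p.2.1 = x} = ∑ i, (mon i).prim x := by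
  rw [Fintype.card_congr (primOfTypeEquiv mon x)]
  simp [Fintype.card_sigma]

lemma card_starOfType (x : D) :
    Fintype.card {p : StarInst mon // p.2.1 = x} = ∑ i, (mon i).star x := by
  rw [Fintype.card_congr (starOfTypeEquiv mon x)]
  simp [Fintype.card_sigma]

def primOnEquiv [DecidableEq I] (i0 : I) :
    {p : PrimInst mon // p.1 = i0} ≃ Σ x : D, Fin ((mon i0).prim x) where
  toFun := fun ⟨⟨i, y, f⟩, h⟩ => ⟨y, Fin.cast (congrArg (fun j => (mon j).prim y) h) f⟩
  invFun := fun ⟨y, f⟩ => ⟨⟨i0, y, f⟩, rfl⟩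
  left_inv := fun ⟨⟨i, y, f⟩, h⟩ => by subst h; rfl
  right_inv := fun ⟨y, f⟩ => rfl

lemma card_primOn [DecidableEq I] (i0 : I) :
    Fintype.card {p : PrimInst mon // p.1 = i0} = ∑ x, (mon i0).prim x := by
  rw [Fintype.card_congr (primOnEquiv mon i0)]
  simp [Fintype.card_sigma]

lemma card_primInst : Fintype.card (PrimInst mon) = ∑ i, ∑ x, (mon i).prim x := by
  rw [show Fintype.card (PrimInst mon)
      = Fintype.card (Σ i : I, Σ x : D, Fin ((mon i).prim x)) from rfl]
  simp [Fintype.card_sigma]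

lemma card_starInst : Fintype.card (StarInst mon) = ∑ i, ∑ x, (mon i).star x := by
  rw [show Fintype.card (StarInst mon)
      = Fintype.card (Σ i : I, Σ x : D, Fin ((mon i).star x)) from rfl]
  simp [Fintype.card_sigma]

end Aux
section Cascade
variable (k n : ℕ)

instance : Fintype (CascadeIdx k n) :=
  inferInstanceAs (Fintype ((Fin k × Fin n) ⊕ ((Fin k × Fin n) ⊕ (Unit ⊕ Unit))))
instance : DecidableEq (CascadeIdx k n) :=
  inferInstanceAs (DecidableEq ((Fin k × Fin n) ⊕ ((Fin k × Fin n) ⊕ (Unit ⊕ Unit))))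

lemma sum_cascadeIdx (f : CascadeIdx k n → ℕ) :
    ∑ i, f i = (∑ p : Fin k × Fin n, f (Sum.inl p)) +
      ((∑ p : Fin k × Fin n, f (Sum.inr (Sum.inl p))) +
        (f (Sum.inr (Sum.inr (Sum.inl ()))) + f (termIdx k n))) := by
  let g : (Fin k × Fin n) ⊕ ((Fin k × Fin n) ⊕ (Unit ⊕ Unit)) → ℕ := f
  have h : ∑ i, f i = ∑ i, g i := rfl
  rw [h, Fintype.sum_sum_type, Fintype.sum_sum_type, Fintype.sum_sum_type]
  simp [g, termIdx]

lemma sum_castSucc (x : Fin (k+1)) :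
    (∑ i : Fin k, if x = i.castSucc then 1 else 0)
      = if x = Fin.last k then 0 else 1 := by
  rcases eq_or_ne x (Fin.last k) with rfl | h
  · simp [(Fin.castSucc_lt_last _).ne']
  · obtain ⟨j, rfl⟩ : ∃ j : Fin k, j.castSucc = x := ⟨x.castPred h, Fin.castSucc_castPred x h⟩
    simp [Fin.castSucc_inj, eq_comm, h]

lemma sum_succ (x : Fin (k+1)) :
    (∑ i : Fin k, if x = i.succ then 1 else 0)
      = if x = 0 then 0 else 1 := by
  rcases eq_or_ne x 0 with rfl | h
  · rw [if_pos rfl]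
    exact Finset.sum_eq_zero fun i _ => by simp [(Fin.succ_ne_zero i).symm]
  · obtain ⟨j, rfl⟩ : ∃ j : Fin k, j.succ = x := ⟨x.pred h, Fin.succ_pred x h⟩
    simp [Fin.succ_inj, eq_comm, h]


lemma sum_fst {k n : ℕ} (g : Fin k → ℕ) :
    ∑ p : Fin k × Fin n, g p.1 = n * ∑ i, g i := by
  rw [Fintype.sum_prod_type_right]
  simp [Finset.sum_const, mul_comm]

lemma card_starOfType_cascade (x : Fin (k+1)) :
    Fintype.card {s : StarInst (cascadeMon k n) // s.2.1 = x} = n := by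
  rw [card_starOfType, sum_cascadeIdx]
  simp only [cascadeMon, Sum.elim_inl, Sum.elim_inr, termIdx,
    gateMon, singleMon, collectorMon, terminatorMon]
  rw [sum_fst (fun i => if x = i.castSucc then 1 else 0), sum_castSucc]
  rcases eq_or_ne x (Fin.last k) with rfl | h
  · simp
  · simp [h]

lemma card_primOfType_cascade_ge (x : Fin (k+1)) :
    n ≤ Fintype.card {p : PrimInst (cascadeMon k n) // p.2.1 = x} := by
  rw [card_primOfType, sum_cascadeIdx]
  simp only [cascadeMon, Sum.elim_inl, Sum.elim_inr, termIdx,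
    gateMon, singleMon, collectorMon, terminatorMon]
  rw [sum_fst (fun i => if x = i.succ then 1 else 0),
    sum_fst (fun i => if x = i.castSucc then 1 else 0), sum_succ, sum_castSucc]
  rcases eq_or_ne x (Fin.last k) with rfl | h
  · simp
  · simp [h]

lemma card_starInst_cascade :
    Fintype.card (StarInst (cascadeMon k n)) = (k + 1) * n := by
  rw [card_starInst, sum_cascadeIdx]
  simp only [cascadeMon, Sum.elim_inl, Sum.elim_inr, termIdx,
    gateMon, singleMon, collectorMon, terminatorMon]
  simp [Finset.sum_ite_eq', Finset.sum_const]
  ring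

lemma card_primInst_cascade :
    Fintype.card (PrimInst (cascadeMon k n)) = (2 * k + 1) * n := by
  rw [card_primInst, sum_cascadeIdx]
  simp only [cascadeMon, Sum.elim_inl, Sum.elim_inr, termIdx,
    gateMon, singleMon, collectorMon, terminatorMon]
  simp [Finset.sum_ite_eq', Finset.sum_const]
  ring

lemma card_primOnTerm :
    Fintype.card {p : PrimInst (cascadeMon k n) // p.1 = termIdx k n} = n := by
  rw [card_primOn]
  simp [cascadeMon, termIdx, terminatorMon, Finset.sum_ite_eq']

end Cascade
section Cfg
variable (k n : ℕ)

/-- The index of the collector monomer. -/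
def collIdx : CascadeIdx k n := Sum.inr (Sum.inr (Sum.inl ()))

/-- canonical prim instance on a gate -/
def gatePrim (l : Fin k) (a : Fin n) : PrimInst (cascadeMon k n) :=
  ⟨Sum.inl (l, a), l.succ, ⟨0, by simp [cascadeMon, gateMon]⟩⟩

/-- canonical prim instance on a single -/
def singlePrim (l : Fin k) (a : Fin n) : PrimInst (cascadeMon k n) :=
  ⟨Sum.inr (Sum.inl (l, a)), l.castSucc, ⟨0, by simp [cascadeMon, singleMon]⟩⟩

lemma prim_eq_gatePrim (p : PrimInst (cascadeMon k n)) (l : Fin k) (a : Fin n)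
    (h : p.1 = Sum.inl (l, a)) : p = gatePrim k n l a := by
  obtain ⟨i, x, f⟩ := p
  have h' : i = Sum.inl (l, a) := h
  subst h'
  have hx : x = l.succ := by
    by_contra hx
    have := f.isLt
    simp [cascadeMon, gateMon, hx] at this
  subst hx
  obtain ⟨v, hv⟩ := f
  have h1 : (cascadeMon k n (Sum.inl (l, a))).prim l.succ = 1 := by simp [cascadeMon, gateMon]
  have hv0 : v = 0 := by rw [h1] at hv; omega
  subst hv0; rfl

lemma prim_eq_singlePrim (p : PrimInst (cascadeMon k n)) (l : Fin k) (a : Fin n)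
    (h : p.1 = Sum.inr (Sum.inl (l, a))) : p = singlePrim k n l a := by
  obtain ⟨i, x, f⟩ := p
  have h' : i = Sum.inr (Sum.inl (l, a)) := h
  subst h'
  have hx : x = l.castSucc := by
    by_contra hx
    have := f.isLt
    simp [cascadeMon, singleMon, hx] at this
  subst hx
  obtain ⟨v, hv⟩ := f
  have h1 : (cascadeMon k n (Sum.inr (Sum.inl (l, a)))).prim l.castSucc = 1 := by
    simp [cascadeMon, singleMon]
  have hv0 : v = 0 := by rw [h1] at hv; omega
  subst hv0; rfl

lemma no_prim_on_coll (p : PrimInst (cascadeMon k n)) (h : p.1 = collIdx k n) : False := by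
  obtain ⟨i, x, f⟩ := p
  have h' : i = collIdx k n := h
  subst h'
  have := f.isLt
  simp [cascadeMon, collIdx, collectorMon] at this

lemma prim_on_term (p : PrimInst (cascadeMon k n)) (h : p.1 = termIdx k n) :
    p.2.1 = Fin.last k := by
  obtain ⟨i, x, f⟩ := p
  have h' : i = termIdx k n := h
  subst h'
  by_contra hx
  have := f.isLt
  simp [cascadeMon, termIdx, terminatorMon, hx] at this

lemma star_cases (s : StarInst (cascadeMon k n)) :
    (∃ l a, s.1 = Sum.inl (l, a) ∧ s.2.1 = l.castSucc) ∨
      (s.1 = collIdx k n ∧ s.2.1 = Fin.last k) := by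
  obtain ⟨i, x, f⟩ := s
  rcases i with ⟨l, a⟩ | (⟨l, a⟩ | (u | u))
  · left
    refine ⟨l, a, rfl, ?_⟩
    by_contra hx
    have := f.isLt
    simp [cascadeMon, gateMon, hx] at this
  · have := f.isLt
    simp [cascadeMon, singleMon] at this
  · right
    refine ⟨rfl, ?_⟩
    by_contra hx
    have := f.isLt
    simp [cascadeMon, collectorMon, hx] at this
  · have := f.isLt
    simp [cascadeMon, terminatorMon] at this

variable (γ : Config (cascadeMon k n))

lemma term_ne_coll : termIdx k n ≠ collIdx k n := by
  intro h
  have h' : (Sum.inr (Sum.inr (Sum.inr ())) : (Fin k × Fin n) ⊕ ((Fin k × Fin n) ⊕ (Unit ⊕ Unit)))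
      = Sum.inr (Sum.inr (Sum.inl ())) := h
  simp at h'

lemma term_prim_unmatched (hfree : γ.Free (termIdx k n))
    (p : PrimInst (cascadeMon k n)) (hp : p.1 = termIdx k n) : γ.bond p = none := by
  rcases hb : γ.bond p with _ | s
  · rfl
  · exfalso
    have hx : p.2.1 = s.2.1 := γ.compat p s hb
    have hpl : p.2.1 = Fin.last k := prim_on_term k n p hp
    have hsl : s.2.1 = Fin.last k := by rw [← hx, hpl]
    have hsc : s.1 = collIdx k n := by
      rcases star_cases k n s with ⟨l, a, _, hl⟩ | ⟨hc, _⟩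
      · rw [hsl] at hl
        exact absurd hl.symm (Fin.castSucc_lt_last l).ne
      · exact hc
    have hadj : (γ.bindingGraph).Adj (termIdx k n) (collIdx k n) :=
      ⟨term_ne_coll k n, p, s, hb, Or.inl ⟨hp, hsc⟩⟩
    exact absurd (hfree (collIdx k n) hadj.reachable) (Ne.symm (term_ne_coll k n))

lemma star_matched (hn : 0 < n) (hsat : γ.Saturated) (s : StarInst (cascadeMon k n)) :
    ∃ p, γ.bond p = some s := by
  by_contra hs
  push_neg at hs
  have hall : ∀ p : PrimInst (cascadeMon k n), p.2.1 = s.2.1 → (γ.bond p).isSome := by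
    intro p hp
    rcases hb : γ.bond p with _ | t
    · exact absurd ⟨p, s, hp, hb, hs⟩ hsat
    · rfl
  let F : {p : PrimInst (cascadeMon k n) // p.2.1 = s.2.1} →
      {t : StarInst (cascadeMon k n) // t.2.1 = s.2.1} := fun p =>
    ⟨(γ.bond p.1).get (hall p.1 p.2),
      by
        have hb : γ.bond p.1 = some ((γ.bond p.1).get (hall p.1 p.2)) :=
          (Option.some_get (hall p.1 p.2)).symm
        rw [← γ.compat p.1 _ hb, p.2]⟩
  have hinj : Function.Injective F := by
    intro p q h
    have hp : γ.bond p.1 = some (F p).1 := (Option.some_get _).symm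
    have hq : γ.bond q.1 = some (F q).1 := (Option.some_get _).symm
    rw [h] at hp
    exact Subtype.ext (γ.inj _ _ _ hp hq)
  have hnotmem : (⟨s, rfl⟩ : {t : StarInst (cascadeMon k n) // t.2.1 = s.2.1}) ∉ Set.range F := by
    rintro ⟨p, hp⟩
    have : γ.bond p.1 = some s := by
      have := (Option.some_get (hall p.1 p.2)).symm
      rw [show ((γ.bond p.1).get (hall p.1 p.2)) = s from congrArg Subtype.val hp] at this
      exact this
    exact hs p.1 this
  have hlt := Fintype.card_lt_of_injective_of_notMem F hinj hnotmem
  rw [card_starOfType_cascade] at hlt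
  have hge := card_primOfType_cascade_ge k n s.2.1
  omega

end Cfg
section Climb
variable (k n : ℕ) (γ : Config (cascadeMon k n))

/-- the monomer holding the star to which i's unique prim is bonded, if any -/
def up : CascadeIdx k n → Option (CascadeIdx k n)
  | Sum.inl (l, a) => (γ.bond (gatePrim k n l a)).map (·.1)
  | Sum.inr (Sum.inl (l, a)) => (γ.bond (singlePrim k n l a)).map (·.1)
  | Sum.inr (Sum.inr _) => none

@[simp] lemma up_gate (l : Fin k) (a : Fin n) :
    up k n γ (Sum.inl (l, a)) = (γ.bond (gatePrim k n l a)).map (·.1) := rfl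
@[simp] lemma up_single (l : Fin k) (a : Fin n) :
    up k n γ (Sum.inr (Sum.inl (l, a))) = (γ.bond (singlePrim k n l a)).map (·.1) := rfl
@[simp] lemma up_coll : up k n γ (collIdx k n) = none := rfl
@[simp] lemma up_term : up k n γ (termIdx k n) = none := rfl

def lvl : CascadeIdx k n → ℕ
  | Sum.inl (l, _) => 2 * l.1 + 2
  | Sum.inr (Sum.inl (l, _)) => 2 * l.1 + 1
  | Sum.inr (Sum.inr (Sum.inl _)) => 2 * k + 1
  | Sum.inr (Sum.inr (Sum.inr _)) => 0

lemma lvl_le (i : CascadeIdx k n) : lvl k n i ≤ 2 * k + 1 := by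
  rcases i with ⟨l, a⟩ | (⟨l, a⟩ | (u | u))
  · have := l.isLt; simp only [lvl]; omega
  · have := l.isLt; simp only [lvl]; omega
  · simp only [lvl]; omega
  · simp only [lvl]; omega

lemma lvl_up {i j : CascadeIdx k n} (h : up k n γ i = some j) :
    lvl k n i < lvl k n j := by
  rcases i with ⟨l, a⟩ | (⟨l, a⟩ | (u | u))
  · rw [up_gate] at h
    obtain ⟨s, hb, hs⟩ := Option.map_eq_some_iff.mp h
    have hc : (gatePrim k n l a).2.1 = s.2.1 := γ.compat _ s hb
    have hc' : s.2.1 = l.succ := hc.symm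
    rcases star_cases k n s with ⟨l', a', hs1, hs2⟩ | ⟨hs1, hs2⟩
    · have hv : l'.1 = l.1 + 1 := by
        have := congrArg Fin.val (hc'.symm.trans hs2)
        simpa using this.symm
      rw [← hs, hs1]
      simp only [lvl]
      omega
    · rw [← hs, hs1]
      have := l.isLt
      simp only [lvl, collIdx]
      omega
  · rw [up_single] at h
    obtain ⟨s, hb, hs⟩ := Option.map_eq_some_iff.mp h
    have hc : (singlePrim k n l a).2.1 = s.2.1 := γ.compat _ s hb
    have hc' : s.2.1 = l.castSucc := hc.symm
    rcases star_cases k n s with ⟨l', a', hs1, hs2⟩ | ⟨hs1, hs2⟩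
    · have hv : l'.1 = l.1 := by
        have := congrArg Fin.val (hc'.symm.trans hs2)
        simpa using this.symm
      rw [← hs, hs1]
      simp only [lvl]
      omega
    · rw [← hs, hs1]
      have := l.isLt
      simp only [lvl, collIdx]
      omega
  · have h' : (none : Option (CascadeIdx k n)) = some j := h
    simp at h'
  · have h' : (none : Option (CascadeIdx k n)) = some j := h
    simp at h'

lemma bond_up (hfree : γ.Free (termIdx k n)) (p : PrimInst (cascadeMon k n))
    (s : StarInst (cascadeMon k n)) (hb : γ.bond p = some s) :
    up k n γ p.1 = some s.1 := by
  rcases hi : p.1 with ⟨l, a⟩ | (⟨l, a⟩ | (u | u))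
  · have hp := prim_eq_gatePrim k n p l a hi
    rw [up_gate, ← hp, hb]
    rfl
  · have hp := prim_eq_singlePrim k n p l a hi
    rw [up_single, ← hp, hb]
    rfl
  · cases u
    exact (no_prim_on_coll k n p hi).elim
  · cases u
    rw [term_prim_unmatched k n γ hfree p hi] at hb
    exact absurd hb (by simp)

lemma up_adj (hfree : γ.Free (termIdx k n)) {i j : CascadeIdx k n}
    (h : up k n γ i = some j) : γ.bindingGraph.Adj i j := by
  have hne : i ≠ j := fun he => absurd (lvl_up k n γ h) (by rw [he]; omega)
  rcases i with ⟨l, a⟩ | (⟨l, a⟩ | (u | u))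
  · rw [up_gate] at h
    obtain ⟨s, hb, hs⟩ := Option.map_eq_some_iff.mp h
    exact ⟨hne, gatePrim k n l a, s, hb, Or.inl ⟨rfl, hs⟩⟩
  · rw [up_single] at h
    obtain ⟨s, hb, hs⟩ := Option.map_eq_some_iff.mp h
    exact ⟨hne, singlePrim k n l a, s, hb, Or.inl ⟨rfl, hs⟩⟩
  · have h' : (none : Option (CascadeIdx k n)) = some j := h
    simp at h'
  · have h' : (none : Option (CascadeIdx k n)) = some j := h
    simp at h'

def climbF : ℕ → CascadeIdx k n → CascadeIdx k n
  | 0, i => i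
  | m + 1, i =>
    match up k n γ i with
    | none => i
    | some j => climbF m j

lemma climbF_none (m : ℕ) (i : CascadeIdx k n) (h : up k n γ i = none) :
    climbF k n γ m i = i := by
  cases m <;> simp [climbF, h]

lemma climbF_some (m : ℕ) (i j : CascadeIdx k n) (h : up k n γ i = some j) :
    climbF k n γ (m + 1) i = climbF k n γ m j := by
  simp [climbF, h]

lemma climbF_main : ∀ (m : ℕ) (i : CascadeIdx k n), 2 * k + 2 - lvl k n i ≤ m →
    γ.Free (termIdx k n) →
    up k n γ (climbF k n γ m i) = none ∧
      γ.bindingGraph.Reachable i (climbF k n γ m i) ∧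
      ∀ m', m ≤ m' → climbF k n γ m' i = climbF k n γ m i := by
  intro m
  induction m with
  | zero =>
    intro i h _
    have := lvl_le k n i
    omega
  | succ m ih =>
    intro i h hfree
    rcases hu : up k n γ i with _ | j
    · rw [climbF_none k n γ _ i hu]
      exact ⟨hu, SimpleGraph.Reachable.refl i,
        fun m' _ => by rw [climbF_none k n γ _ i hu]⟩
    · have hlt := lvl_up k n γ hu
      have hj : 2 * k + 2 - lvl k n j ≤ m := by omega
      obtain ⟨h1, h2, h3⟩ := ih j hj hfree
      rw [climbF_some k n γ m i j hu]
      refine ⟨h1, (up_adj k n γ hfree hu).reachable.trans h2, ?_⟩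
      intro m' hm'
      obtain ⟨m'', rfl⟩ : ∃ t, m' = t + 1 := ⟨m' - 1, by omega⟩
      rw [climbF_some k n γ m'' i j hu, h3 m'' (by omega)]

/-- the sink of the polymer containing i -/
def Climb (i : CascadeIdx k n) : CascadeIdx k n := climbF k n γ (2 * k + 2) i

lemma up_Climb (hfree : γ.Free (termIdx k n)) (i : CascadeIdx k n) : up k n γ (Climb k n γ i) = none :=
  (climbF_main k n γ _ i (Nat.sub_le _ _) hfree).1

lemma reach_Climb (hfree : γ.Free (termIdx k n)) (i : CascadeIdx k n) : γ.bindingGraph.Reachable i (Climb k n γ i) :=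
  (climbF_main k n γ _ i (Nat.sub_le _ _) hfree).2.1

lemma Climb_of_sink {i : CascadeIdx k n} (h : up k n γ i = none) : Climb k n γ i = i :=
  climbF_none k n γ _ i h

lemma Climb_up (hfree : γ.Free (termIdx k n)) {i j : CascadeIdx k n} (h : up k n γ i = some j) :
    Climb k n γ i = Climb k n γ j := by
  have h1 : Climb k n γ i = climbF k n γ (2 * k + 1) j := climbF_some k n γ _ i j h
  have hlv : 1 ≤ lvl k n j := by have := lvl_up k n γ h; omega
  have h3 := (climbF_main k n γ (2 * k + 2 - lvl k n j) j le_rfl hfree).2.2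
  rw [h1, h3 (2 * k + 1) (by omega), ← h3 (2 * k + 2) (by omega)]
  rfl

lemma Climb_adj (hfree : γ.Free (termIdx k n)) {i j : CascadeIdx k n} (h : γ.bindingGraph.Adj i j) :
    Climb k n γ i = Climb k n γ j := by
  obtain ⟨hne, p, s, hb, hor⟩ := h
  have hup := bond_up k n γ hfree p s hb
  rcases hor with ⟨hp, hs⟩ | ⟨hp, hs⟩
  · rw [hp, hs] at hup
    exact Climb_up k n γ hfree hup
  · rw [hp, hs] at hup
    exact (Climb_up k n γ hfree hup).symm

lemma Climb_reach (hfree : γ.Free (termIdx k n)) {i j : CascadeIdx k n} (h : γ.bindingGraph.Reachable i j) :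
    Climb k n γ i = Climb k n γ j := by
  obtain ⟨w⟩ := h
  induction w with
  | nil => rfl
  | cons ha _ ih => exact (Climb_adj k n γ hfree ha).trans ih

noncomputable def compEquiv (hfree : γ.Free (termIdx k n)) :
    γ.bindingGraph.ConnectedComponent ≃ {i : CascadeIdx k n // up k n γ i = none} where
  toFun := SimpleGraph.ConnectedComponent.lift
    (fun i => ⟨Climb k n γ i, up_Climb k n γ hfree i⟩)
    (fun _ _ w _ => Subtype.ext (Climb_reach k n γ hfree ⟨w⟩))
  invFun := fun s => γ.bindingGraph.connectedComponentMk s.1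
  left_inv := by
    intro C
    induction C using SimpleGraph.ConnectedComponent.ind with
    | _ i => exact SimpleGraph.ConnectedComponent.sound (reach_Climb k n γ hfree i).symm
  right_inv := fun ⟨i, h⟩ => Subtype.ext (Climb_of_sink k n γ h)

lemma entropy_eq_card_sinks (hfree : γ.Free (termIdx k n)) :
    γ.entropy = Fintype.card {i : CascadeIdx k n // up k n γ i = none} := by
  rw [Config.entropy, Nat.card_congr (compEquiv k n γ hfree), Nat.card_eq_fintype_card]

end Climb
section Count
variable (k n : ℕ) (γ : Config (cascadeMon k n))

lemma up_none_of (p : PrimInst (cascadeMon k n)) (hp : γ.bond p = none) :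
    up k n γ p.1 = none := by
  rcases hi : p.1 with ⟨l, a⟩ | (⟨l, a⟩ | (u | u))
  · rw [up_gate, ← prim_eq_gatePrim k n p l a hi, hp]; rfl
  · rw [up_single, ← prim_eq_singlePrim k n p l a hi, hp]; rfl
  · rfl
  · rfl

def sinkEquiv :
    {i : CascadeIdx k n // up k n γ i = none} ≃
      ({p : PrimInst (cascadeMon k n) // γ.bond p = none ∧ ¬ p.1 = termIdx k n} ⊕ Bool) where
  toFun := fun ⟨i, h⟩ =>
    match i, h with
    | Sum.inl (l, a), h =>
        Sum.inl ⟨gatePrim k n l a, Option.map_eq_none_iff.mp h, fun hab => by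
            have h' : (Sum.inl (l, a) : (Fin k × Fin n) ⊕ ((Fin k × Fin n) ⊕ (Unit ⊕ Unit)))
            = Sum.inr (Sum.inr (Sum.inr ())) := hab
            simp at h'⟩
    | Sum.inr (Sum.inl (l, a)), h =>
        Sum.inl ⟨singlePrim k n l a, Option.map_eq_none_iff.mp h,
          fun hab => by
            have h' : (Sum.inr (Sum.inl (l, a)) : (Fin k × Fin n) ⊕ ((Fin k × Fin n) ⊕ (Unit ⊕ Unit)))
            = Sum.inr (Sum.inr (Sum.inr ())) := hab
            simp at h'⟩
    | Sum.inr (Sum.inr (Sum.inl _)), _ => Sum.inr true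
    | Sum.inr (Sum.inr (Sum.inr _)), _ => Sum.inr false
  invFun := fun z =>
    match z with
    | Sum.inl ⟨p, hp, _⟩ => ⟨p.1, up_none_of k n γ p hp⟩
    | Sum.inr true => ⟨collIdx k n, rfl⟩
    | Sum.inr false => ⟨termIdx k n, rfl⟩
  left_inv := by
    rintro ⟨(⟨l, a⟩ | (⟨l, a⟩ | (⟨⟩ | ⟨⟩))), h⟩ <;> rfl
  right_inv := by
    rintro (⟨⟨i, x, f⟩, hp, ht⟩ | b)
    · rcases i with ⟨l, a⟩ | (⟨l, a⟩ | (⟨⟩ | ⟨⟩))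
      · exact congrArg Sum.inl (Subtype.ext (prim_eq_gatePrim k n _ l a rfl).symm)
      · exact congrArg Sum.inl (Subtype.ext (prim_eq_singlePrim k n _ l a rfl).symm)
      · exact (no_prim_on_coll k n ⟨_, x, f⟩ rfl).elim
      · exact absurd rfl ht
    · cases b <;> rfl

lemma card_and_split {α : Type} [Fintype α] (A B : α → Prop)
    [DecidablePred A] [DecidablePred B] :
    Fintype.card {x // A x ∧ B x} + Fintype.card {x // A x ∧ ¬ B x}
      = Fintype.card {x // A x} := by
  rw [← Fintype.card_sum]
  exact Fintype.card_congr
    ((Equiv.sumCongr (Equiv.subtypeSubtypeEquivSubtypeInter A B).symm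
        (Equiv.subtypeSubtypeEquivSubtypeInter A fun x => ¬ B x).symm).trans
      (Equiv.sumCompl fun x : {x // A x} => B x.1))

lemma card_matched (hn : 0 < n) (hsat : γ.Saturated) :
    Fintype.card {p : PrimInst (cascadeMon k n) // (γ.bond p).isSome} = (k + 1) * n := by
  rw [← card_starInst_cascade k n]
  refine Fintype.card_congr (Equiv.ofBijective (fun p => (γ.bond p.1).get p.2) ⟨?_, ?_⟩)
  · intro p q h
    have h' : (γ.bond p.1).get p.2 = (γ.bond q.1).get q.2 := h
    apply Subtype.ext
    refine γ.inj p.1 q.1 ((γ.bond p.1).get p.2) (Option.some_get p.2).symm ?_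
    rw [h']
    exact (Option.some_get q.2).symm
  · intro s
    obtain ⟨p, hp⟩ := star_matched k n γ hn hsat s
    have hs : (γ.bond p).isSome := by rw [hp]; rfl
    refine ⟨⟨p, hs⟩, ?_⟩
    apply Option.some_injective
    rw [Option.some_get, hp]

end Count
/-- Every saturated configuration of the depth-`k`,
redundancy-`n` translator cascade without input in which the terminator
monomer is free (output `1`) has entropy exactly `n(k-1) + 2`. -/
theorem stmt7 (k n : ℕ) (hk : 0 < k) (hn : 0 < n)
    (γ : Config (cascadeMon k n)) (hsat : γ.Saturated)
    (hfree : γ.Free (termIdx k n)) :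
    γ.entropy = n * (k - 1) + 2 := by
  have e1 := entropy_eq_card_sinks k n γ hfree
  have e2 : Fintype.card {i : CascadeIdx k n // up k n γ i = none}
      = Fintype.card {p : PrimInst (cascadeMon k n) //
          γ.bond p = none ∧ ¬ p.1 = termIdx k n} + 2 := by
    rw [Fintype.card_congr (sinkEquiv k n γ), Fintype.card_sum, Fintype.card_bool]
  have hsplit := card_and_split (fun p : PrimInst (cascadeMon k n) => γ.bond p = none)
    (fun p => p.1 = termIdx k n)
  have h1 : Fintype.card {p : PrimInst (cascadeMon k n) //
      γ.bond p = none ∧ p.1 = termIdx k n} = n := by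
    exact (Fintype.card_congr (Equiv.subtypeEquivRight fun p =>
      ⟨fun h => h.2, fun h => ⟨term_prim_unmatched k n γ hfree p h, h⟩⟩)).trans
      (card_primOnTerm k n)
  have h2 : Fintype.card {p : PrimInst (cascadeMon k n) // γ.bond p = none} = k * n := by
    have he : Fintype.card {p : PrimInst (cascadeMon k n) // γ.bond p = none}
        = Fintype.card {p : PrimInst (cascadeMon k n) // ¬ ((γ.bond p).isSome = true)} :=
      Fintype.card_congr (Equiv.subtypeEquivRight fun p =>
        Option.not_isSome_iff_eq_none.symm)
    rw [he, Fintype.card_subtype_compl, card_matched k n γ hn hsat, card_primInst_cascade]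
    have h5 : (2 * k + 1) * n = k * n + (k + 1) * n := by ring
    omega
  have h3 : n * (k - 1) + n = n * k := by
    obtain ⟨k', rfl⟩ : ∃ k', k = k' + 1 := ⟨k - 1, by omega⟩
    simp [Nat.mul_succ]
  have h4 : k * n = n * k := Nat.mul_comm k n
  omega
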